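/- arXiv:2505.11902 — 3 statements merged into one kernel-verified Lean document; each statement's English description precedes it below -/
import Mathlib

section
/- Let F : ℝ^d → ℝ be differentiable with L-Lipschitz gradient (L > 0). Let x ∈ ℝ^d, let g ∈ ℝ^d satisfy ‖g − ∇F(x)‖ ≤ δ for some δ ≥ 0, let 0 < α ≤ 1/L, and set x' := x − α g. Then F(x') ≤ F(x) − (α/2)‖∇F(x)‖² + 2 α δ ‖∇F(x)‖ + (L/2) α² δ². -/
open scoped RealInnerProductSpace

private lemma descent_lemma {d : ℕ}
    (F : EuclideanSpace ℝ (Fin d) → ℝ) (L : ℝ) (hL : 0 ≤ L)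
    (hdiff : Differentiable ℝ F)
    (hlip : ∀ x y, ‖gradient F x - gradient F y‖ ≤ L * ‖x - y‖)
    (x v : EuclideanSpace ℝ (Fin d)) :
    F (x + v) ≤ F x + ⟪gradient F x, v⟫ + L / 2 * ‖v‖ ^ 2 := by
  have hgc : Continuous (gradient F) := by
    apply (LipschitzWith.of_dist_le_mul (K := ⟨L, hL⟩) ?_).continuous
    intro a b
    have := hlip a b
    simp only [dist_eq_norm]
    exact this
  -- derivative of φ t = F (x + t • v)
  have hφ : ∀ t : ℝ, HasDerivAt (fun s : ℝ => F (x + s • v))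
      (⟪gradient F (x + t • v), v⟫) t := by
    intro t
    have hline : HasDerivAt (fun s : ℝ => x + s • v) v t := by
      simpa using ((hasDerivAt_id t).smul_const v).const_add x
    have hF := ((hdiff (x + t • v)).hasGradientAt).hasFDerivAt
    exact hF.comp_hasDerivAt t hline
  have hcont : Continuous (fun t : ℝ => ⟪gradient F (x + t • v), v⟫) := by
    exact (hgc.comp (by continuity)).inner continuous_const
  have hint : F (x + v) - F x
      = ∫ t in (0:ℝ)..1, ⟪gradient F (x + t • v), v⟫ := by
    have h := intervalIntegral.integral_eq_sub_of_hasDerivAt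
      (f := fun s : ℝ => F (x + s • v))
      (fun t _ => hφ t) (hcont.intervalIntegrable 0 1)
    simp only [one_smul, zero_smul, add_zero] at h
    exact h.symm
  have hbound : ∀ t ∈ Set.Icc (0:ℝ) 1,
      ⟪gradient F (x + t • v), v⟫ ≤ ⟪gradient F x, v⟫ + L * t * ‖v‖ ^ 2 := by
    intro t ht
    have h1 : ⟪gradient F (x + t • v) - gradient F x, v⟫
        ≤ ‖gradient F (x + t • v) - gradient F x‖ * ‖v‖ :=
      real_inner_le_norm _ _
    have h2 : ‖gradient F (x + t • v) - gradient F x‖ ≤ L * (t * ‖v‖) := by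
      have := hlip (x + t • v) x
      simpa [norm_smul, abs_of_nonneg ht.1] using this
    have h3 : ⟪gradient F (x + t • v) - gradient F x, v⟫ ≤ L * t * ‖v‖ ^ 2 := by
      calc ⟪gradient F (x + t • v) - gradient F x, v⟫
          ≤ ‖gradient F (x + t • v) - gradient F x‖ * ‖v‖ := h1
        _ ≤ L * (t * ‖v‖) * ‖v‖ := by
            exact mul_le_mul_of_nonneg_right h2 (norm_nonneg v)
        _ = L * t * ‖v‖ ^ 2 := by ring
    have := inner_sub_left (𝕜 := ℝ) (gradient F (x + t • v)) (gradient F x) v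
    linarith [h3, this.symm ▸ h3]
  have hmono : (∫ t in (0:ℝ)..1, ⟪gradient F (x + t • v), v⟫)
      ≤ ∫ t in (0:ℝ)..1, (⟪gradient F x, v⟫ + L * t * ‖v‖ ^ 2) := by
    apply intervalIntegral.integral_mono_on (by norm_num)
      (hcont.intervalIntegrable 0 1)
      ((by continuity : Continuous fun t : ℝ => ⟪gradient F x, v⟫ + L * t * ‖v‖ ^ 2).intervalIntegrable 0 1)
    exact hbound
  have hval : (∫ t in (0:ℝ)..1, (⟪gradient F x, v⟫ + L * t * ‖v‖ ^ 2))
      = ⟪gradient F x, v⟫ + L / 2 * ‖v‖ ^ 2 := by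
    rw [intervalIntegral.integral_congr
        (g := fun t : ℝ => ⟪gradient F x, v⟫ + (L * ‖v‖ ^ 2) * t) (fun t _ => by ring),
      intervalIntegral.integral_add intervalIntegrable_const
        ((show Continuous fun t : ℝ => (L * ‖v‖ ^ 2) * t by fun_prop).intervalIntegrable 0 1),
      intervalIntegral.integral_const_mul, integral_id]
    simp
    ring
  linarith [hint, hmono, hval.le, hval.ge]

set_option maxHeartbeats 1000000 in
/-- One inexact gradient step on an `L`-smooth function: if `F : ℝ^d → ℝ` is
differentiable with `L`-Lipschitz gradient, `g` approximates `∇F(x)` up to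
drift `δ`, and `0 < α ≤ 1/L`, then the step `x' = x - α g` satisfies
`F(x') ≤ F(x) - (α/2)‖∇F(x)‖² + 2αδ‖∇F(x)‖ + (L/2)α²δ²`. -/
theorem descent_step_inexact_gradient {d : ℕ}
    (F : EuclideanSpace ℝ (Fin d) → ℝ) (L : ℝ) (hL : 0 < L)
    (hdiff : Differentiable ℝ F)
    (hlip : ∀ x y, ‖gradient F x - gradient F y‖ ≤ L * ‖x - y‖)
    (x g : EuclideanSpace ℝ (Fin d)) (δ : ℝ) (hδ : 0 ≤ δ)
    (hg : ‖g - gradient F x‖ ≤ δ)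
    (α : ℝ) (hα : 0 < α) (hαL : α ≤ 1 / L) :
    F (x - α • g) ≤ F x - (α / 2) * ‖gradient F x‖ ^ 2
      + 2 * α * δ * ‖gradient F x‖ + (L / 2) * α ^ 2 * δ ^ 2 := by
  set G := gradient F x with hG
  have key := descent_lemma F L hL.le hdiff hlip x (-(α • g))
  have hxv : x + -(α • g) = x - α • g := (sub_eq_add_neg x (α • g)).symm
  rw [hxv] at key
  have hinner : ⟪G, -(α • g)⟫ = -α * ⟪G, g⟫ := by
    rw [inner_neg_right, real_inner_smul_right]; ring
  have hnorm : ‖-(α • g)‖ ^ 2 = α ^ 2 * ‖g‖ ^ 2 := by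
    rw [norm_neg, norm_smul]
    simp [abs_of_pos hα, mul_pow]
  rw [hinner, hnorm] at key
  -- ⟪G, g⟫ = ‖G‖² + ⟪G, g - G⟫ ≥ ‖G‖² - δ‖G‖
  have hGg : ⟪G, g⟫ ≥ ‖G‖ ^ 2 - δ * ‖G‖ := by
    have h1 : ⟪G, g⟫ = ‖G‖ ^ 2 + ⟪G, g - G⟫ := by
      rw [inner_sub_right, real_inner_self_eq_norm_sq]; ring
    have h2 : ⟪G, g - G⟫ ≥ -(δ * ‖G‖) := by
      have := real_inner_le_norm G (G - g)
      have h3 : ⟪G, G - g⟫ ≤ δ * ‖G‖ := by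
        calc ⟪G, G - g⟫ ≤ ‖G‖ * ‖G - g‖ := real_inner_le_norm _ _
          _ ≤ ‖G‖ * δ := by
              apply mul_le_mul_of_nonneg_left _ (norm_nonneg _)
              rwa [← norm_neg, neg_sub]
          _ = δ * ‖G‖ := by ring
      have h4 : ⟪G, G - g⟫ = -⟪G, g - G⟫ := by
        rw [← inner_neg_right, neg_sub]
      linarith [h4 ▸ h3]
    linarith
  -- ‖g‖ ≤ ‖G‖ + δ
  have hgn : ‖g‖ ^ 2 ≤ ‖G‖ ^ 2 + 2 * δ * ‖G‖ + δ ^ 2 := by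
    have h1 : ‖g‖ ≤ ‖G‖ + δ := by
      have hGg' : G + (g - G) = g := by rw [add_comm, sub_add_cancel]
      calc ‖g‖ = ‖G + (g - G)‖ := by rw [hGg']
        _ ≤ ‖G‖ + ‖g - G‖ := norm_add_le _ _
        _ ≤ ‖G‖ + δ := by linarith
    nlinarith [norm_nonneg g, norm_nonneg G]
  have hαL' : L * α ≤ 1 := by
    rw [le_div_iff₀ hL] at hαL; linarith
  have hGnn : (0:ℝ) ≤ ‖G‖ := norm_nonneg _
  have h1 : -α * ⟪G, g⟫ ≤ -α * ‖G‖ ^ 2 + α * δ * ‖G‖ := by nlinarith [hGg, hα.le]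
  have h2 : L / 2 * (α ^ 2 * ‖g‖ ^ 2)
      ≤ L / 2 * α ^ 2 * ‖G‖ ^ 2 + L * α ^ 2 * δ * ‖G‖ + L / 2 * α ^ 2 * δ ^ 2 := by
    nlinarith [mul_le_mul_of_nonneg_left hgn (show (0:ℝ) ≤ L / 2 * α ^ 2 by positivity)]
  have h3 : L / 2 * α ^ 2 * ‖G‖ ^ 2 ≤ α / 2 * ‖G‖ ^ 2 := by
    nlinarith [mul_nonneg (sub_nonneg.2 hαL') (mul_nonneg hα.le (sq_nonneg ‖G‖))]
  have h4 : L * α ^ 2 * δ * ‖G‖ ≤ α * δ * ‖G‖ := by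
    nlinarith [mul_nonneg (sub_nonneg.2 hαL') (mul_nonneg (mul_nonneg hα.le hδ) hGnn)]
  linarith [key, h1, h2, h3, h4]
end

section
/- For each t ∈ {0, …, T−1} let ℓ_t : ℝ^d → ℝ be convex and differentiable with ‖∇ℓ_t(y)‖ ≤ G for all y, and let u_t ∈ ℝ^d be a global minimizer of ℓ_t. Let the iterates be x_{t+1} = x_t − α ∇ℓ_t(x_t) with constant step size α > 0. Suppose ‖x_t − u_t‖ ≤ D and ‖x_t − u_{t−1}‖ ≤ D for all applicable t. Then the dynamic regret R_T := Σ_{t=0}^{T−1} (ℓ_t(x_t) − ℓ_t(u_t)) satisfies R_T ≤ ‖x_0 − u_0‖²/(2α) + (G²/2) α T + (D/α) · CV_T, where CV_T := Σ_{t=1}^{T−1} ‖u_t − u_{t−1}‖ is the cumulative variation of the per-round minimizers. -/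
set_option maxHeartbeats 1600000

open InnerProductSpace Finset

lemma convex_grad_ineq {E : Type*} [NormedAddCommGroup E] [InnerProductSpace ℝ E]
    [CompleteSpace E] {f : E → ℝ}
    (hf : ConvexOn ℝ Set.univ f) (hd : Differentiable ℝ f) (x y : E) :
    f x + ⟪gradient f x, y - x⟫_ℝ ≤ f y := by
  set v := y - x with hv
  have hline : HasDerivAt (fun s : ℝ => x + s • v) v 0 := by
    simpa using ((hasDerivAt_id (0:ℝ)).smul_const v).const_add x
  have hF : HasFDerivAt f ((toDual ℝ E) (gradient f x)) (x + (0:ℝ) • v) := by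
    simpa using hasGradientAt_iff_hasFDerivAt.mp (hd x).hasGradientAt
  have hg : HasDerivAt (fun s : ℝ => f (x + s • v)) (⟪gradient f x, v⟫_ℝ) 0 := by
    have h := hF.comp_hasDerivAt (0:ℝ) hline
    exact h.congr_deriv (by simp)
  have h1 : ∀ s : ℝ, x + s • v = AffineMap.lineMap x y s := by
    intro s; simp [AffineMap.lineMap_apply, hv]; module
  have hgc : ConvexOn ℝ Set.univ (fun s : ℝ => f (x + s • v)) := by
    have hc := (hf.subset (Set.subset_univ _) convex_univ).comp_affineMap
      (AffineMap.lineMap x y)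
    refine ConvexOn.congr (hc.subset (fun s _ => Set.mem_preimage.mpr trivial) convex_univ) ?_
    intro s _; simp [Function.comp, h1 s]
  have hslope := hgc.le_slope_of_hasDerivAt (Set.mem_univ (0:ℝ)) (Set.mem_univ (1:ℝ))
    (by norm_num) hg
  have hsl : slope (fun s : ℝ => f (x + s • v)) 0 1 = f y - f x := by
    simp [slope, hv]
  rw [hsl] at hslope
  linarith

lemma telescope_sum {A B c : ℕ → ℝ} :
    ∀ T, 1 ≤ T → (∀ t, 1 ≤ t → t < T → A t - B (t - 1) ≤ c t) →
      ∑ t ∈ Finset.range T, (A t - B t) ≤ A 0 - B (T - 1) + ∑ t ∈ Finset.Ico 1 T, c t := by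
  refine Nat.le_induction ?_ ?_
  · intro _; simp
  · intro T hT ih h
    have hih := ih (fun t h1 h2 => h t h1 (h2.trans (Nat.lt_succ_self T)))
    rw [Finset.sum_range_succ, Finset.sum_Ico_succ_top hT]
    have hkey : A T - B (T - 1) ≤ c T := h T hT (Nat.lt_succ_self T)
    simp only [Nat.add_sub_cancel]
    linarith

/-- Dynamic regret bound for online gradient descent: with convex
differentiable per-round losses `ℓ t` whose gradients are bounded by `G`,
per-round global minimizers `u t`, iterates `x (t+1) = x t - α ∇ℓ_t(x t)`
with constant step size `α > 0`, and uniform distance bounds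
`‖x t - u t‖ ≤ D` and `‖x t - u (t-1)‖ ≤ D`, the dynamic regret satisfies
`R_T ≤ ‖x 0 - u 0‖²/(2α) + (G²/2) α T + (D/α) · CV_T`, where
`CV_T = ∑_{t=1}^{T-1} ‖u t - u (t-1)‖`. -/
theorem ogd_dynamic_regret {d : ℕ} (T : ℕ)
    (ℓ : ℕ → EuclideanSpace ℝ (Fin d) → ℝ) (G D α : ℝ) (hα : 0 < α)
    (hconv : ∀ t < T, ConvexOn ℝ Set.univ (ℓ t))
    (hdiff : ∀ t < T, Differentiable ℝ (ℓ t))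
    (hG : ∀ t < T, ∀ y, ‖gradient (ℓ t) y‖ ≤ G)
    (u : ℕ → EuclideanSpace ℝ (Fin d))
    (hu : ∀ t < T, ∀ y, ℓ t (u t) ≤ ℓ t y)
    (x : ℕ → EuclideanSpace ℝ (Fin d))
    (hiter : ∀ t < T, x (t + 1) = x t - α • gradient (ℓ t) (x t))
    (hD1 : ∀ t < T, ‖x t - u t‖ ≤ D)
    (hD2 : ∀ t, 1 ≤ t → t < T → ‖x t - u (t - 1)‖ ≤ D) :
    ∑ t ∈ Finset.range T, (ℓ t (x t) - ℓ t (u t))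
      ≤ ‖x 0 - u 0‖ ^ 2 / (2 * α) + (G ^ 2 / 2) * α * T
        + (D / α) * ∑ t ∈ Finset.Ico 1 T, ‖u t - u (t - 1)‖ := by
  rcases Nat.eq_zero_or_pos T with rfl | hT
  · simp; positivity
  set A : ℕ → ℝ := fun t => ‖x t - u t‖ ^ 2 with hA
  set B : ℕ → ℝ := fun t => ‖x (t + 1) - u t‖ ^ 2 with hB
  -- per-round bound
  have hround : ∀ t < T, ℓ t (x t) - ℓ t (u t) ≤ (A t - B t) / (2 * α) + α / 2 * G ^ 2 := by
    intro t ht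
    set g := gradient (ℓ t) (x t) with hg
    have h1 : ℓ t (x t) + ⟪g, u t - x t⟫_ℝ ≤ ℓ t (u t) :=
      convex_grad_ineq (hconv t ht) (hdiff t ht) (x t) (u t)
    have h2 : ⟪g, u t - x t⟫_ℝ = - ⟪g, x t - u t⟫_ℝ := by
      rw [← inner_neg_right]; congr 1; abel
    have h3 : B t = A t - 2 * α * ⟪g, x t - u t⟫_ℝ + α ^ 2 * ‖g‖ ^ 2 := by
      have hx : x (t + 1) - u t = (x t - u t) - α • g := by rw [hiter t ht]; abel
      rw [hB, hA]
      simp only [hx]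
      rw [@norm_sub_sq_real]
      rw [real_inner_smul_right, norm_smul, real_inner_comm]
      simp [mul_pow, abs_of_pos hα]
      ring
    have hgG : ‖g‖ ^ 2 ≤ G ^ 2 := by
      have := hG t ht (x t)
      nlinarith [norm_nonneg g]
    have hInner : ⟪g, x t - u t⟫_ℝ = (A t - B t) / (2 * α) + α / 2 * ‖g‖ ^ 2 := by
      field_simp [h3]; rw [h3]; ring
    nlinarith [h1, h2, hInner, mul_pos hα hα]
  have hG0 : 0 ≤ G := le_trans (norm_nonneg _) (hG 0 hT (x 0))
  have hD0 : 0 ≤ D := le_trans (norm_nonneg _) (hD1 0 hT)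
  -- comparator-change bound
  have hshift : ∀ t, 1 ≤ t → t < T → A t - B (t - 1) ≤ 2 * D * ‖u t - u (t - 1)‖ := by
    intro t h1 h2
    have ht1 : t - 1 + 1 = t := by omega
    have hB' : B (t - 1) = ‖x t - u (t - 1)‖ ^ 2 := by
      simp only [hB]; rw [ht1]
    set a := x t - u t with ha
    set b := x t - u (t - 1) with hb
    have hident : A t - B (t - 1) = ⟪a + b, a - b⟫_ℝ := by
      rw [hB', hA]
      simp only [inner_add_left, inner_sub_right, real_inner_self_eq_norm_sq,
        real_inner_comm b a]
      ring
    have hab : a - b = u (t - 1) - u t := by rw [ha, hb]; abel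
    have hle : ⟪a + b, a - b⟫_ℝ ≤ ‖a + b‖ * ‖a - b‖ := real_inner_le_norm _ _
    have hnab : ‖a + b‖ ≤ 2 * D := by
      calc ‖a + b‖ ≤ ‖a‖ + ‖b‖ := norm_add_le _ _
        _ ≤ 2 * D := by
            have := hD1 t h2; have := hD2 t h1 h2; rw [← ha] at *; rw [← hb] at *; linarith
    have hnrm : ‖a - b‖ = ‖u t - u (t - 1)‖ := by rw [hab, norm_sub_rev]
    calc A t - B (t - 1) = ⟪a + b, a - b⟫_ℝ := hident
      _ ≤ ‖a + b‖ * ‖a - b‖ := hle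
      _ ≤ 2 * D * ‖u t - u (t - 1)‖ := by
          rw [hnrm]; exact mul_le_mul_of_nonneg_right hnab (norm_nonneg _)
  have htel := telescope_sum T hT hshift
  have hBpos : 0 ≤ B (T - 1) := by positivity
  -- sum the per-round bounds
  have hsum : ∑ t ∈ Finset.range T, (ℓ t (x t) - ℓ t (u t))
      ≤ (∑ t ∈ Finset.range T, (A t - B t)) / (2 * α) + α / 2 * G ^ 2 * T := by
    calc ∑ t ∈ Finset.range T, (ℓ t (x t) - ℓ t (u t))
        ≤ ∑ t ∈ Finset.range T, ((A t - B t) / (2 * α) + α / 2 * G ^ 2) :=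
          Finset.sum_le_sum (fun t ht => hround t (Finset.mem_range.mp ht))
      _ = (∑ t ∈ Finset.range T, (A t - B t)) / (2 * α) + α / 2 * G ^ 2 * T := by
          rw [Finset.sum_add_distrib, Finset.sum_const, Finset.card_range, ← Finset.sum_div]
          simp [mul_comm]
  have hfin : (∑ t ∈ Finset.range T, (A t - B t)) / (2 * α)
      ≤ ‖x 0 - u 0‖ ^ 2 / (2 * α) + (D / α) * ∑ t ∈ Finset.Ico 1 T, ‖u t - u (t - 1)‖ := by
    have h1 : ∑ t ∈ Finset.range T, (A t - B t)
        ≤ A 0 + 2 * D * ∑ t ∈ Finset.Ico 1 T, ‖u t - u (t - 1)‖ := by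
      rw [Finset.mul_sum]
      calc ∑ t ∈ Finset.range T, (A t - B t)
          ≤ A 0 - B (T - 1) + ∑ t ∈ Finset.Ico 1 T, 2 * D * ‖u t - u (t - 1)‖ := htel
        _ ≤ A 0 + ∑ t ∈ Finset.Ico 1 T, 2 * D * ‖u t - u (t - 1)‖ := by linarith
    have h2 : (A 0 + 2 * D * ∑ t ∈ Finset.Ico 1 T, ‖u t - u (t - 1)‖) / (2 * α)
        = ‖x 0 - u 0‖ ^ 2 / (2 * α) + (D / α) * ∑ t ∈ Finset.Ico 1 T, ‖u t - u (t - 1)‖ := by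
      rw [hA]; field_simp
    rw [← h2]
    exact div_le_div_of_nonneg_right h1 (by linarith) |>.trans_eq rfl
  calc ∑ t ∈ Finset.range T, (ℓ t (x t) - ℓ t (u t))
      ≤ (∑ t ∈ Finset.range T, (A t - B t)) / (2 * α) + α / 2 * G ^ 2 * T := hsum
    _ ≤ ‖x 0 - u 0‖ ^ 2 / (2 * α) + (D / α) * ∑ t ∈ Finset.Ico 1 T, ‖u t - u (t - 1)‖
        + α / 2 * G ^ 2 * T := by linarith
    _ = ‖x 0 - u 0‖ ^ 2 / (2 * α) + (G ^ 2 / 2) * α * T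
        + (D / α) * ∑ t ∈ Finset.Ico 1 T, ‖u t - u (t - 1)‖ := by ring
end

section
/- Under the hypotheses of the dynamic regret bound — convex differentiable per-round losses ℓ_t with ‖∇ℓ_t‖ ≤ G, minimizers u_t, iterates x_{t+1} = x_t − α∇ℓ_t(x_t), and uniform distance bound ‖x_t − u_t‖ ≤ D, ‖x_t − u_{t−1}‖ ≤ D — if the constant step size is chosen as α = c/√T for some c > 0 and T ≥ 1, then R_T := Σ_{t=0}^{T−1}(ℓ_t(x_t) − ℓ_t(u_t)) ≤ (D²/(2c)) √T + (c G²/2) √T + (D/c) √T · CV_T. In particular, R_T/T → 0 as T → ∞ whenever CV_T = o(√T). -/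
open Finset

lemma grad_convex_ineq {d : ℕ} {f : EuclideanSpace ℝ (Fin d) → ℝ}
    (hconv : ConvexOn ℝ Set.univ f) (hdiff : Differentiable ℝ f)
    (x y : EuclideanSpace ℝ (Fin d)) :
    f x + inner (𝕜 := ℝ) (gradient f x) (y - x) ≤ f y := by
  set v := y - x with hv
  set g : ℝ → ℝ := fun s => f (x + s • v) with hg
  have hcurve : ∀ s : ℝ, HasDerivAt (fun s : ℝ => x + s • v) v s := by
    intro s
    simpa using ((hasDerivAt_id s).smul_const v).const_add x
  have hgconv : ConvexOn ℝ Set.univ g := by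
    have h := hconv.comp_affineMap (AffineMap.lineMap x y)
    have he : (f ∘ (AffineMap.lineMap x y)) = g := by
      funext s
      simp [hg, AffineMap.lineMap_apply_module', add_comm, hv]
    rw [he] at h
    simpa using h
  have hF : HasFDerivAt f ((InnerProductSpace.toDual ℝ _) (gradient f x)) x :=
    hasGradientAt_iff_hasFDerivAt.mp (hdiff x).hasGradientAt
  have hgd : HasDerivAt g (inner (𝕜 := ℝ) (gradient f x) v) 0 := by
    have h0 : (fun s : ℝ => x + s • v) 0 = x := by simp
    have hF' : HasFDerivAt f ((InnerProductSpace.toDual ℝ _) (gradient f x))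
        ((fun s : ℝ => x + s • v) 0) := by rw [h0]; exact hF
    have := hF'.comp_hasDerivAt 0 (hcurve 0)
    simpa [hg, Function.comp_def] using this
  have hs := hgconv.le_slope_of_hasDerivAt (Set.mem_univ 0) (Set.mem_univ 1) zero_lt_one hgd
  have hslope : slope g 0 1 = f y - f x := by
    rw [slope_def_field]
    simp [hg, hv]
  rw [hslope] at hs
  linarith

lemma telescope_shift (A B : ℕ → ℝ) :
    ∀ n, 1 ≤ n →
      ∑ t ∈ range n, (A t - B t)
        = A 0 - B (n - 1) + ∑ t ∈ Finset.Ico 1 n, (A t - B (t - 1)) := by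
  intro n
  induction n with
  | zero => omega
  | succ m ih =>
    intro _
    rcases Nat.eq_zero_or_pos m with hm | hm
    · subst hm; simp
    · rw [Finset.sum_range_succ, ih hm, Finset.sum_Ico_succ_top hm]
      have h1 : m + 1 - 1 = m := rfl
      rw [h1]
      ring

/-- Sublinear dynamic regret with step size `α = c/√T`: under the hypotheses
of the dynamic regret bound (convex differentiable per-round losses `ℓ t` with
`‖∇ℓ_t‖ ≤ G`, per-round minimizers `u t`, iterates
`x (t+1) = x t - α ∇ℓ_t(x t)`, and uniform distance bounds
`‖x t - u t‖ ≤ D`, `‖x t - u (t-1)‖ ≤ D`), if `T ≥ 1` and `α = c / √T` for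
some `c > 0`, then the dynamic regret satisfies
`R_T ≤ (D²/(2c))√T + (cG²/2)√T + (D/c)√T · CV_T`, where
`CV_T = ∑_{t=1}^{T-1} ‖u t - u (t-1)‖`. -/
theorem ogd_dynamic_regret_sqrt_step {d : ℕ} (T : ℕ) (hT : 1 ≤ T)
    (ℓ : ℕ → EuclideanSpace ℝ (Fin d) → ℝ) (G D c α : ℝ) (hc : 0 < c)
    (hαdef : α = c / Real.sqrt T)
    (hconv : ∀ t < T, ConvexOn ℝ Set.univ (ℓ t))
    (hdiff : ∀ t < T, Differentiable ℝ (ℓ t))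
    (hG : ∀ t < T, ∀ y, ‖gradient (ℓ t) y‖ ≤ G)
    (u : ℕ → EuclideanSpace ℝ (Fin d))
    (hu : ∀ t < T, ∀ y, ℓ t (u t) ≤ ℓ t y)
    (x : ℕ → EuclideanSpace ℝ (Fin d))
    (hiter : ∀ t < T, x (t + 1) = x t - α • gradient (ℓ t) (x t))
    (hD1 : ∀ t < T, ‖x t - u t‖ ≤ D)
    (hD2 : ∀ t, 1 ≤ t → t < T → ‖x t - u (t - 1)‖ ≤ D) :
    ∑ t ∈ Finset.range T, (ℓ t (x t) - ℓ t (u t))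
      ≤ (D ^ 2 / (2 * c)) * Real.sqrt T + (c * G ^ 2 / 2) * Real.sqrt T
        + (D / c) * Real.sqrt T * ∑ t ∈ Finset.Ico 1 T, ‖u t - u (t - 1)‖ := by
  have hs : (0:ℝ) < Real.sqrt T := Real.sqrt_pos.mpr (by exact_mod_cast Nat.lt_of_lt_of_le Nat.zero_lt_one hT)
  have hα : 0 < α := hαdef ▸ div_pos hc hs
  have hD : 0 ≤ D := le_trans (norm_nonneg _) (hD1 0 hT)
  set A : ℕ → ℝ := fun t => ‖x t - u t‖ ^ 2 with hA
  set B : ℕ → ℝ := fun t => ‖x (t + 1) - u t‖ ^ 2 with hB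
  -- per-round bound
  have key : ∀ t < T, ℓ t (x t) - ℓ t (u t) ≤ (A t - B t) / (2 * α) + α * G ^ 2 / 2 := by
    intro t ht
    set g := gradient (ℓ t) (x t) with hgdef
    have h1 := grad_convex_ineq (hconv t ht) (hdiff t ht) (x t) (u t)
    have h2 : ℓ t (x t) - ℓ t (u t) ≤ inner (𝕜 := ℝ) g (x t - u t) := by
      have : inner (𝕜 := ℝ) g (u t - x t) = - inner (𝕜 := ℝ) g (x t - u t) := by
        rw [← inner_neg_right, neg_sub]
      linarith [h1, this.symm ▸ h1]
    have hident : B t = A t - 2 * α * inner (𝕜 := ℝ) g (x t - u t) + α ^ 2 * ‖g‖ ^ 2 := by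
      have hx1 : x (t + 1) - u t = (x t - u t) - α • g := by
        rw [hiter t ht]; abel
      rw [hB, hA]
      simp only [hx1]
      rw [norm_sub_sq_real, real_inner_smul_right, real_inner_comm, norm_smul]
      simp [Real.norm_eq_abs, mul_pow, sq_abs]
      ring
    have hGg : ‖g‖ ≤ G := hG t ht (x t)
    have hgnn : (0:ℝ) ≤ ‖g‖ := norm_nonneg _
    have : inner (𝕜 := ℝ) g (x t - u t) = (A t - B t) / (2 * α) + α * ‖g‖ ^ 2 / 2 := by
      field_simp [hident]
      rw [hident]; ring
    rw [this] at h2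
    nlinarith [sq_nonneg ‖g‖, mul_le_mul_of_nonneg_left (mul_le_mul hGg hGg hgnn (le_trans hgnn hGg)) hα.le]
  -- shifted per-round bound
  have shift : ∀ t, 1 ≤ t → t < T → A t - B (t - 1) ≤ 2 * D * ‖u t - u (t - 1)‖ := by
    intro t h1t htT
    have ht' : t - 1 + 1 = t := by omega
    have hb : B (t - 1) = ‖x t - u (t - 1)‖ ^ 2 := by rw [hB]; simp [ht']
    have hs1 : ‖x t - u t‖ ≤ D := hD1 t htT
    have hs2 : ‖x t - u (t - 1)‖ ≤ D := hD2 t h1t htT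
    have htri : ‖x t - u t‖ - ‖x t - u (t - 1)‖ ≤ ‖u t - u (t - 1)‖ := by
      have := norm_sub_norm_le (x t - u t) (x t - u (t - 1))
      have he : (x t - u t) - (x t - u (t - 1)) = -(u t - u (t - 1)) := by abel
      rw [he, norm_neg] at this
      linarith
    rw [hb]
    show ‖x t - u t‖ ^ 2 - ‖x t - u (t - 1)‖ ^ 2 ≤ 2 * D * ‖u t - u (t - 1)‖
    rcases le_or_gt ‖x t - u t‖ ‖x t - u (t - 1)‖ with hle | hlt
    · have h1 : ‖x t - u t‖ ^ 2 ≤ ‖x t - u (t - 1)‖ ^ 2 :=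
        pow_le_pow_left₀ (norm_nonneg _) hle 2
      have h2 : 0 ≤ 2 * D * ‖u t - u (t - 1)‖ := by positivity
      linarith
    · have h1 : 0 ≤ ‖x t - u t‖ - ‖x t - u (t - 1)‖ := by linarith
      have h2 : ‖x t - u t‖ + ‖x t - u (t - 1)‖ ≤ 2 * D := by linarith
      nlinarith [norm_nonneg (u t - u (t - 1)), norm_nonneg (x t - u t),
        norm_nonneg (x t - u (t - 1))]
  -- sum
  set CV := ∑ t ∈ Finset.Ico 1 T, ‖u t - u (t - 1)‖ with hCV
  have hsum1 : ∑ t ∈ Finset.range T, (ℓ t (x t) - ℓ t (u t))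
      ≤ (∑ t ∈ Finset.range T, (A t - B t)) / (2 * α) + T * (α * G ^ 2 / 2) := by
    calc ∑ t ∈ Finset.range T, (ℓ t (x t) - ℓ t (u t))
        ≤ ∑ t ∈ Finset.range T, ((A t - B t) / (2 * α) + α * G ^ 2 / 2) :=
          Finset.sum_le_sum fun t ht => key t (Finset.mem_range.mp ht)
      _ = (∑ t ∈ Finset.range T, (A t - B t)) / (2 * α) + T * (α * G ^ 2 / 2) := by
          rw [Finset.sum_add_distrib, Finset.sum_const, ← Finset.sum_div]
          simp [mul_comm]
  have hsum2 : ∑ t ∈ Finset.range T, (A t - B t) ≤ D ^ 2 + 2 * D * CV := by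
    rw [telescope_shift A B T hT]
    have h0 : A 0 ≤ D ^ 2 := by
      rw [hA]; exact pow_le_pow_left₀ (norm_nonneg _) (hD1 0 hT) 2
    have hbnn : 0 ≤ B (T - 1) := sq_nonneg _
    have hub : ∑ t ∈ Finset.Ico 1 T, (A t - B (t - 1)) ≤ 2 * D * CV := by
      rw [hCV, Finset.mul_sum]
      refine Finset.sum_le_sum fun t ht => ?_
      obtain ⟨h1t, htT⟩ := Finset.mem_Ico.mp ht
      exact shift t h1t htT
    linarith
  -- arithmetic with α = c / √T
  set s := Real.sqrt (T : ℝ) with hsdef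
  have hT2 : (T : ℝ) = s ^ 2 := (Real.sq_sqrt (Nat.cast_nonneg T)).symm
  have hfinal : (D ^ 2 + 2 * D * CV) / (2 * α) + (T : ℝ) * (α * G ^ 2 / 2)
      = (D ^ 2 / (2 * c)) * s + (c * G ^ 2 / 2) * s + (D / c) * s * CV := by
    rw [hαdef, hT2]
    field_simp
    ring
  have h2α : (0:ℝ) < 2 * α := by linarith
  have hmono : (∑ t ∈ Finset.range T, (A t - B t)) / (2 * α)
      ≤ (D ^ 2 + 2 * D * CV) / (2 * α) := (div_le_div_iff_of_pos_right h2α).mpr hsum2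
  linarith [hsum1, hmono, hfinal.le]
end
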